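/- Let v1, v2, v3 be unit vectors in R^3 with pairwise inner products all equal to 1/√5 (the icosahedral configuration). Then |det[v1 v2 v3]| = √(2(5+√5))/5. -/

import Mathlib

/-- If `v1, v2, v3` are unit vectors in `ℝ³` with pairwise inner products `1/√5`
(the icosahedral configuration), then `|det [v1 v2 v3]| = √(2(5+√5))/5`. -/
theorem icosahedral_config_abs_det
    (v1 v2 v3 : EuclideanSpace ℝ (Fin 3))
    (h1 : ‖v1‖ = 1) (h2 : ‖v2‖ = 1) (h3 : ‖v3‖ = 1)
    (h12 : (inner ℝ v1 v2 : ℝ) = 1 / Real.sqrt 5)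
    (h13 : (inner ℝ v1 v3 : ℝ) = 1 / Real.sqrt 5)
    (h23 : (inner ℝ v2 v3 : ℝ) = 1 / Real.sqrt 5) :
    |(Matrix.of fun i j : Fin 3 => (![v1, v2, v3] j) i).det|
      = Real.sqrt (2 * (5 + Real.sqrt 5)) / 5 := by
  set M : Matrix (Fin 3) (Fin 3) ℝ :=
    Matrix.of fun i j : Fin 3 => (![v1, v2, v3] j) i with hM
  have hent : ∀ a b : EuclideanSpace ℝ (Fin 3),
      (∑ k, a k * b k) = (inner ℝ a b : ℝ) := by
    intro a b
    rw [PiLp.inner_apply]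
    simp [RCLike.inner_apply, mul_comm]
  have hself : ∀ a : EuclideanSpace ℝ (Fin 3), ‖a‖ = 1 → (inner ℝ a a : ℝ) = 1 := by
    intro a ha
    rw [real_inner_self_eq_norm_sq, ha]; norm_num
  have hs : Real.sqrt 5 ^ 2 = 5 := Real.sq_sqrt (by norm_num)
  have hspos : (0:ℝ) < Real.sqrt 5 := Real.sqrt_pos.2 (by norm_num)
  have key : M.det ^ 2 = 2 * (5 + Real.sqrt 5) / 25 := by
    have hsq : M.det ^ 2 = (M.transpose * M).det := by
      rw [Matrix.det_mul, Matrix.det_transpose, sq]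
    rw [hsq, Matrix.det_fin_three]
    simp only [Matrix.mul_apply, Matrix.transpose_apply, hM, Matrix.of_apply,
      Matrix.cons_val_zero, Matrix.cons_val_one, Matrix.head_cons,
      Matrix.cons_val_two, Matrix.tail_cons]
    have c21 : (inner ℝ v2 v1 : ℝ) = 1 / Real.sqrt 5 := by rw [real_inner_comm]; exact h12
    have c31 : (inner ℝ v3 v1 : ℝ) = 1 / Real.sqrt 5 := by rw [real_inner_comm]; exact h13
    have c32 : (inner ℝ v3 v2 : ℝ) = 1 / Real.sqrt 5 := by rw [real_inner_comm]; exact h23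
    simp only [hent, hself v1 h1, hself v2 h2, hself v3 h3, h12, h13, h23, c21, c31, c32]
    field_simp
    nlinarith [hs, hspos]
  have habs : |M.det| = Real.sqrt (2 * (5 + Real.sqrt 5) / 25) := by
    rw [← Real.sqrt_sq_eq_abs, key]
  rw [habs, show (25:ℝ) = 5 ^ 2 by norm_num, Real.sqrt_div (by positivity),
    Real.sqrt_sq (by norm_num : (0:ℝ) ≤ 5)]
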